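/- For any simplicial set X and natural number n, there is a pushout square of simplicial sets in which the n-skeleton sk_{n-1} X receives a map from the coproduct ∐_{L_n X} ∂Δⁿ indexed by the set L_n X of nondegenerate n-simplices of X, mapped via attaching maps, the top map is the coproduct of boundary inclusions ∐_{L_n X} ∂Δⁿ ↪ ∐_{L_n X} Δⁿ, and the pushout is sk_n X; moreover X is the colimit of the countable sequence of skeleton inclusions sk_0 X ↪ sk_1 X ↪ sk_2 X ↪ ⋯. -/

import Mathlib

open CategoryTheory CategoryTheory.Limits Opposite Simplicial

universe u

namespace SkeletalDecomposition

/-- A simplex of `X` belongs to the `n`-skeleton of `X` if it is the image under a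
simplicial operator of a simplex of dimension at most `n`. -/
def MemSk (X : SSet.{u}) (n : ℕ) (m : SimplexCategoryᵒᵖ) (x : X.obj m) : Prop :=
  ∃ (k : ℕ) (_ : k ≤ n) (f : m.unop ⟶ ⦋k⦌) (y : X.obj (op ⦋k⦌)), x = X.map f.op y

lemma memSk_map {X : SSet.{u}} {n : ℕ} {m m' : SimplexCategoryᵒᵖ} (g : m ⟶ m')
    {x : X.obj m} (h : MemSk X n m x) : MemSk X n m' (X.map g x) := by
  obtain ⟨k, hk, f, y, rfl⟩ := h
  refine ⟨k, hk, g.unop ≫ f, y, ?_⟩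
  rw [op_comp, Quiver.Hom.op_unop, FunctorToTypes.map_comp_apply]

lemma memSk_mono {X : SSet.{u}} {n n' : ℕ} (h : n ≤ n') {m : SimplexCategoryᵒᵖ}
    {x : X.obj m} : MemSk X n m x → MemSk X n' m x := by
  rintro ⟨k, hk, f, y, hy⟩
  exact ⟨k, hk.trans h, f, y, hy⟩

/-- The `n`-skeleton of a simplicial set, as a simplicial set. -/
def sk (X : SSet.{u}) (n : ℕ) : SSet.{u} where
  obj m := {x : X.obj m // MemSk X n m x}
  map g := TypeCat.ofHom fun x => ⟨X.map g x.1, memSk_map g x.2⟩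
  map_id m := by
    ext x
    exact FunctorToTypes.map_id_apply X x.1
  map_comp f g := by
    ext x
    exact FunctorToTypes.map_comp_apply X f g x.1

/-- The inclusion `sk_n X ↪ sk_{n+1} X`. -/
def skIncl (X : SSet.{u}) (n : ℕ) : sk X n ⟶ sk X (n + 1) where
  app m := TypeCat.ofHom fun x => ⟨x.1, memSk_mono (Nat.le_succ n) x.2⟩
  naturality _ _ _ := rfl

/-- The tower of skeleta of `X`, as a functor `ℕ ⥤ SSet`. -/
def skFunctor (X : SSet.{u}) : ℕ ⥤ SSet.{u} where
  obj n := sk X n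
  map {a b} h := { app := fun m => TypeCat.ofHom fun x => ⟨x.1, memSk_mono (leOfHom h) x.2⟩,
                   naturality := fun _ _ _ => rfl }
  map_id _ := rfl
  map_comp _ _ := rfl

/-- The cocone of skeleton inclusions `sk_n X ↪ X`. -/
def skCocone (X : SSet.{u}) : Cocone (skFunctor X) where
  pt := X
  ι := { app := fun n => { app := fun m => TypeCat.ofHom fun x => x.1, naturality := fun _ _ _ => rfl }
         naturality := fun a b h => rfl }

/-- A simplex is degenerate if it is the image of a lower-dimensional simplex. -/
def IsDegenerate (X : SSet.{u}) (n : ℕ) (x : X.obj (op ⦋n⦌)) : Prop :=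
  ∃ (m : ℕ) (_ : m < n) (f : (⦋n⦌ : SimplexCategory) ⟶ ⦋m⦌) (y : X.obj (op ⦋m⦌)),
    x = X.map f.op y

/-- The set of nondegenerate `n`-simplices of `X`. -/
def L (X : SSet.{u}) (n : ℕ) : Type u := {x : X.obj (op ⦋n⦌) // ¬ IsDegenerate X n x}

/-- The attaching map `Δ[n+1] ⟶ sk_{n+1} X` corresponding to a nondegenerate
`(n+1)`-simplex. -/
noncomputable def attachCell (X : SSet.{u}) (n : ℕ) (i : L X (n + 1)) :
    Δ[n + 1] ⟶ sk X (n + 1) :=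
  (SSet.yonedaEquiv (X := sk X (n + 1)) (n := ⦋n + 1⦌)).symm
    ⟨i.1, ⟨n + 1, le_refl _, 𝟙 _, i.1, by simp⟩⟩

/-- The restriction of the attaching map to the boundary, landing in the `n`-skeleton. -/
def attachBoundary (X : SSet.{u}) (n : ℕ) (i : L X (n + 1)) :
    (∂Δ[n + 1] : SSet.{u}) ⟶ sk X n where
  app m := TypeCat.ofHom fun α =>
    ⟨X.map ((SSet.stdSimplex.objEquiv (n := ⦋n + 1⦌) (m := m)) α.1).op i.1, by
      obtain ⟨j, θ', hθ⟩ := SimplexCategory.eq_comp_δ_of_not_surjective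
        ((SSet.stdSimplex.objEquiv (n := ⦋n + 1⦌) (m := m)) α.1) α.2
      refine ⟨n, le_refl n, θ', X.map (SimplexCategory.δ j).op i.1, ?_⟩
      rw [hθ, op_comp, FunctorToTypes.map_comp_apply]⟩
  naturality m m' g := by
    ext α
    apply Subtype.ext
    show X.map ((SSet.stdSimplex.objEquiv (n := ⦋n + 1⦌) (m := m')) (Δ[n + 1].map g α.1)).op i.1 =
      X.map g (X.map ((SSet.stdSimplex.objEquiv (n := ⦋n + 1⦌) (m := m)) α.1).op i.1)
    rw [SSet.stdSimplex.map_apply, Equiv.apply_symm_apply, op_comp,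
      Quiver.Hom.op_unop, FunctorToTypes.map_comp_apply]

/-- The map `∐ ∂Δ[n+1] ⟶ ∐ Δ[n+1]` given by the coproduct of boundary inclusions. -/
noncomputable def attachTop (X : SSet.{u}) (n : ℕ) :
    (∐ fun _ : L X (n + 1) => (∂Δ[n + 1] : SSet.{u})) ⟶ (∐ fun _ : L X (n + 1) => Δ[n + 1]) :=
  Limits.Sigma.map fun _ => (∂Δ[n + 1]).ι

/-- The left vertical map of the attaching square. -/
noncomputable def attachLeft (X : SSet.{u}) (n : ℕ) :
    (∐ fun _ : L X (n + 1) => (∂Δ[n + 1] : SSet.{u})) ⟶ sk X n :=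
  Limits.Sigma.desc (attachBoundary X n)

/-- The right vertical map of the attaching square. -/
noncomputable def attachRight (X : SSet.{u}) (n : ℕ) :
    (∐ fun _ : L X (n + 1) => Δ[n + 1]) ⟶ sk X (n + 1) :=
  Limits.Sigma.desc (attachCell X n)










/-- For an epi `σ` in `SimplexCategory` and any point `a`, there is a section of `σ`
passing through `a`. -/
lemma exists_section_through {m k : SimplexCategory} (σ : m ⟶ k)
    (hσ : Function.Surjective σ.toOrderHom) (a : Fin (m.len + 1)) :
    ∃ s : k ⟶ m, s ≫ σ = 𝟙 k ∧ s.toOrderHom (σ.toOrderHom a) = a := by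
  have hne : ∀ b : Fin (k.len + 1), (Finset.univ.filter fun x => σ.toOrderHom x = b).Nonempty := by
    intro b
    obtain ⟨x, hx⟩ := hσ b
    exact ⟨x, by simpa using hx⟩
  set m0 : Fin (k.len + 1) → Fin (m.len + 1) :=
    fun b => (Finset.univ.filter fun x => σ.toOrderHom x = b).min' (hne b) with hm0
  have hσm0 : ∀ b, σ.toOrderHom (m0 b) = b := by
    intro b
    have := Finset.min'_mem _ (hne b)
    simpa using this
  have hm0_le : ∀ b x, σ.toOrderHom x = b → m0 b ≤ x := by
    intro b x hx
    exact Finset.min'_le _ _ (by simpa using hx)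
  have hm0_mono : Monotone m0 := by
    intro b b' hbb'
    by_contra h
    push_neg at h
    have h1 : σ.toOrderHom (m0 b') ≤ σ.toOrderHom (m0 b) := σ.toOrderHom.monotone h.le
    rw [hσm0, hσm0] at h1
    have : b = b' := le_antisymm hbb' h1
    subst this
    exact absurd rfl h.ne
  set f : Fin (k.len + 1) → Fin (m.len + 1) := fun b => if b = σ.toOrderHom a then a else m0 b
    with hf
  have hσf : ∀ b, σ.toOrderHom (f b) = b := by
    intro b
    by_cases hb : b = σ.toOrderHom a
    · simp [hf, hb]
    · simp [hf, hb, hσm0]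
  have hfa : f (σ.toOrderHom a) = a := by simp [hf]
  have hmono : Monotone f := by
    intro b b' hbb'
    by_cases hb : b = σ.toOrderHom a <;> by_cases hb' : b' = σ.toOrderHom a
    · simp [hf, hb, hb']
    · -- b = σ a, b' ≠ σ a, so σ a < b', must show a ≤ m0 b'
      simp only [hf, if_pos hb, if_neg hb']
      by_contra h
      push_neg at h
      have : σ.toOrderHom (m0 b') ≤ σ.toOrderHom a := σ.toOrderHom.monotone h.le
      rw [hσm0] at this
      exact hb' (le_antisymm this (hb ▸ hbb'))
    · -- b ≠ σ a, b' = σ a : show m0 b ≤ a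
      simp only [hf, if_neg hb, if_pos hb']
      by_contra h
      push_neg at h
      have : σ.toOrderHom a ≤ σ.toOrderHom (m0 b) := σ.toOrderHom.monotone h.le
      rw [hσm0] at this
      exact hb (le_antisymm (hb' ▸ hbb') this)
    · simpa [hf, hb, hb'] using hm0_mono hbb'
  refine ⟨SimplexCategory.Hom.mk ⟨f, hmono⟩, ?_, hfa⟩
  apply SimplexCategory.Hom.ext
  apply OrderHom.ext
  funext b
  exact hσf b








/-- Epi-mono factorization in `SimplexCategory` with explicit `mk` objects. -/
lemma exists_factorization {a b : SimplexCategory} (f : a ⟶ b) :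
    ∃ (j : ℕ) (e : a ⟶ ⦋j⦌) (i : (⦋j⦌ : SimplexCategory) ⟶ b),
      Epi e ∧ Mono i ∧ e ≫ i = f ∧ j ≤ a.len ∧ j ≤ b.len := by
  refine ⟨(image f).len, factorThruImage f ≫ eqToHom (SimplexCategory.mk_len _).symm,
    eqToHom (SimplexCategory.mk_len _) ≫ image.ι f, ?_, ?_, ?_, ?_, ?_⟩
  · exact epi_comp _ _
  · exact mono_comp _ _
  · simp
  · exact SimplexCategory.len_le_of_epi (factorThruImage f)
  · exact SimplexCategory.len_le_of_mono (image.ι f)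

/-- If `f` is not surjective then the mono part of its factorization is strictly smaller. -/
lemma exists_factorization_lt {a : SimplexCategory} {n : ℕ} (f : a ⟶ ⦋n⦌)
    (hf : ¬ Function.Surjective f.toOrderHom) :
    ∃ (j : ℕ) (e : a ⟶ ⦋j⦌) (i : (⦋j⦌ : SimplexCategory) ⟶ ⦋n⦌),
      Epi e ∧ Mono i ∧ e ≫ i = f ∧ j < n := by
  obtain ⟨j, e, i, he, hi, hfac, _, hjb⟩ := exists_factorization f
  refine ⟨j, e, i, he, hi, hfac, ?_⟩
  rcases lt_or_eq_of_le hjb with h | h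
  · exact h
  · exfalso
    subst h
    have : i = 𝟙 _ := SimplexCategory.eq_id_of_mono i
    rw [this, Category.comp_id] at hfac
    subst hfac
    exact hf (SimplexCategory.epi_iff_surjective.mp he)


section EZ
variable {X : SSet.{u}}

lemma ez_unique {k : ℕ} {m : SimplexCategoryᵒᵖ}
    {σ σ' : m.unop ⟶ ⦋k⦌} (hσ : Function.Surjective σ.toOrderHom)
    (hσ' : Function.Surjective σ'.toOrderHom)
    {y y' : X.obj (op ⦋k⦌)} (hy : ¬ IsDegenerate X k y)
    (h : X.map σ.op y = X.map σ'.op y') : σ = σ' ∧ y = y' := by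
  have key : ∀ s : (⦋k⦌ : SimplexCategory) ⟶ m.unop, s ≫ σ = 𝟙 _ → s ≫ σ' = 𝟙 _ ∧ y = y' := by
    intro s hs
    have h1 : y = X.map (s ≫ σ').op y' := by
      have : y = X.map s.op (X.map σ.op y) := by
        rw [← FunctorToTypes.map_comp_apply, ← op_comp, hs, op_id, FunctorToTypes.map_id_apply]
      rw [this, h, ← FunctorToTypes.map_comp_apply, ← op_comp]
    obtain ⟨j, e, i, he, hi, hfac, hja, _⟩ := exists_factorization (s ≫ σ')
    rcases lt_or_eq_of_le hja with hlt | heq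
    · exfalso
      apply hy
      refine ⟨j, hlt, e, X.map i.op y', ?_⟩
      rw [h1, ← hfac, op_comp, FunctorToTypes.map_comp_apply]
    · subst heq
      have hi' : i = 𝟙 _ := SimplexCategory.eq_id_of_mono i
      have he' : e = 𝟙 _ := SimplexCategory.eq_id_of_epi e
      rw [hi', he', Category.comp_id] at hfac
      constructor
      · exact hfac.symm
      · rw [h1, ← hfac, op_id, FunctorToTypes.map_id_apply]
  constructor
  · apply SimplexCategory.Hom.ext
    apply OrderHom.ext
    funext a
    obtain ⟨s, hs, hsa⟩ := exists_section_through σ hσ a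
    have h2 := (key s hs).1
    have : σ'.toOrderHom (s.toOrderHom (σ.toOrderHom a)) = σ.toOrderHom a := by
      exact congrFun (congrArg (fun (f : (⦋k⦌ : SimplexCategory) ⟶ ⦋k⦌) =>
        (f.toOrderHom : Fin (k + 1) → Fin (k + 1))) h2) (σ.toOrderHom a)
    rw [hsa] at this
    exact this.symm
  · obtain ⟨s, hs, _⟩ := exists_section_through σ hσ 0
    exact (key s hs).2

lemma not_memSk_of_nondeg {n : ℕ} {m : SimplexCategoryᵒᵖ}
    {σ : m.unop ⟶ ⦋n + 1⦌} (hσ : Function.Surjective σ.toOrderHom)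
    {y : X.obj (op ⦋n + 1⦌)} (hy : ¬ IsDegenerate X (n + 1) y) :
    ¬ MemSk X n m (X.map σ.op y) := by
  rintro ⟨k, hk, f, z, hz⟩
  obtain ⟨s, hs, _⟩ := exists_section_through σ hσ 0
  have h1 : y = X.map (s ≫ f).op z := by
    have : y = X.map s.op (X.map σ.op y) := by
      rw [← FunctorToTypes.map_comp_apply, ← op_comp, hs, op_id, FunctorToTypes.map_id_apply]
    rw [this, hz, ← FunctorToTypes.map_comp_apply, ← op_comp]
  obtain ⟨j, e, i, he, hi, hfac, _, hjb⟩ := exists_factorization (s ≫ f)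
  apply hy
  refine ⟨j, lt_of_le_of_lt (hjb.trans hk) (Nat.lt_succ_self n), e, X.map i.op z, ?_⟩
  rw [h1, ← hfac, op_comp, FunctorToTypes.map_comp_apply]

lemma ez_exists {n : ℕ} {m : SimplexCategoryᵒᵖ} {x : X.obj m}
    (h1 : MemSk X (n + 1) m x) (h2 : ¬ MemSk X n m x) :
    ∃ (σ : m.unop ⟶ ⦋n + 1⦌) (y : L X (n + 1)),
      Function.Surjective σ.toOrderHom ∧ x = X.map σ.op y.1 := by
  obtain ⟨k, hk, f, y₀, rfl⟩ := h1
  rcases lt_or_eq_of_le hk with hlt | heq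
  · exact absurd ⟨k, Nat.lt_succ_iff.mp hlt, f, y₀, rfl⟩ h2
  · subst heq
    by_cases hf : Function.Surjective f.toOrderHom
    · by_cases hy : IsDegenerate X (n + 1) y₀
      · exfalso
        obtain ⟨j, hj, g, z, rfl⟩ := hy
        exact h2 ⟨j, Nat.lt_succ_iff.mp hj, f ≫ g, z, by
          rw [op_comp, FunctorToTypes.map_comp_apply]⟩
      · exact ⟨f, ⟨y₀, hy⟩, hf, rfl⟩
    · exfalso
      obtain ⟨j, e, i, he, hi, hfac, hjlt⟩ := exists_factorization_lt f hf
      exact h2 ⟨j, Nat.lt_succ_iff.mp hjlt, e, X.map i.op y₀, by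
        rw [← FunctorToTypes.map_comp_apply, ← op_comp, hfac]⟩

end EZ
section Colim
variable (X : SSet.{u})

lemma memSk_self {m : SimplexCategoryᵒᵖ} (x : X.obj m) : MemSk X m.unop.len m x := by
  have h := SimplexCategory.mk_len m.unop
  refine ⟨m.unop.len, le_refl _, eqToHom h.symm,
    X.map (eqToHom (congrArg op h.symm)) x, ?_⟩
  rw [← FunctorToTypes.map_comp_apply]
  simp [eqToHom_op, eqToHom_trans]

lemma cocone_compat (s : Cocone (skFunctor X)) {n n' : ℕ} (hnn' : n ≤ n')
    {m : SimplexCategoryᵒᵖ} (x : X.obj m) (h : MemSk X n m x) :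
    (s.ι.app n).app m ⟨x, h⟩ = (s.ι.app n').app m ⟨x, memSk_mono hnn' h⟩ := by
  have := s.w (homOfLE hnn')
  have := congrArg (fun (f : sk X n ⟶ s.pt) => f.app m ⟨x, h⟩) this
  exact this.symm

/-- `X` is the colimit of its skeleta. -/
noncomputable def skIsColimit : IsColimit (skCocone X) where
  desc s :=
    { app := fun m => TypeCat.ofHom fun x => (s.ι.app m.unop.len).app m ⟨x, memSk_self X x⟩
      naturality := fun m m' g => by
        ext x
        show (s.ι.app m'.unop.len).app m' ⟨X.map g x, _⟩ = s.pt.map g ((s.ι.app m.unop.len).app m ⟨x, _⟩)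
        rw [cocone_compat X s (le_max_right m.unop.len m'.unop.len) (X.map g x) (memSk_self X _),
          cocone_compat X s (le_max_left m.unop.len m'.unop.len) x (memSk_self X x)]
        have := ConcreteCategory.congr_hom
          ((s.ι.app (max m.unop.len m'.unop.len)).naturality g) ⟨x, memSk_mono (le_max_left _ _) (memSk_self X x)⟩
        exact this }
  fac s n := by
    ext m x
    obtain ⟨x, hx⟩ := x
    show (s.ι.app m.unop.len).app m ⟨x, memSk_self X x⟩ = (s.ι.app n).app m ⟨x, hx⟩
    rw [cocone_compat X s (le_max_left m.unop.len n) x (memSk_self X x),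
      cocone_compat X s (le_max_right m.unop.len n) x hx]
  uniq s f hf := by
    ext m x
    show f.app m x = (s.ι.app m.unop.len).app m ⟨x, memSk_self X x⟩
    rw [← hf m.unop.len]
    rfl

end Colim
section Push

variable (X : SSet.{u}) (n : ℕ)

/-- The `m`-simplex of `Δ[n+1]` associated to a morphism `m.unop ⟶ [n+1]`. -/
abbrev splx {m : SimplexCategoryᵒᵖ} (σ : m.unop ⟶ ⦋n + 1⦌) : Δ[n + 1].obj m :=
  (SSet.stdSimplex.objEquiv (n := ⦋n + 1⦌) (m := m)).symm σ

lemma splx_map {m m' : SimplexCategoryᵒᵖ} (g : m ⟶ m') (σ : m.unop ⟶ ⦋n + 1⦌) :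
    Δ[n + 1].map g (splx n σ) = splx n (g.unop ≫ σ) := by
  rw [SSet.stdSimplex.map_apply, Equiv.apply_symm_apply]

lemma square_comm :
    attachLeft X n ≫ skIncl X n = attachTop X n ≫ attachRight X n := by
  apply Sigma.hom_ext
  intro y
  rw [← Category.assoc, ← Category.assoc]
  rw [show Sigma.ι (fun _ : L X (n + 1) => (∂Δ[n + 1] : SSet.{u})) y ≫ attachLeft X n =
      attachBoundary X n y from Sigma.ι_desc _ _]
  rw [show Sigma.ι (fun _ : L X (n + 1) => (∂Δ[n + 1] : SSet.{u})) y ≫ attachTop X n =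
      (∂Δ[n + 1]).ι ≫ Sigma.ι (fun _ : L X (n + 1) => (Δ[n + 1] : SSet.{u})) y from
    by simp [attachTop]]
  rw [Category.assoc]
  rw [show Sigma.ι (fun _ : L X (n + 1) => Δ[n + 1]) y ≫ attachRight X n =
      attachCell X n y from Sigma.ι_desc _ _]
  ext m α
  apply Subtype.ext
  rfl

variable {X n} (s : PushoutCocone (attachLeft X n) (attachTop X n))

lemma cond (y : L X (n + 1)) :
    attachBoundary X n y ≫ s.inl =
      (∂Δ[n + 1]).ι ≫ (Sigma.ι (fun _ : L X (n + 1) => Δ[n + 1]) y ≫ s.inr) := by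
  rw [show attachBoundary X n y = Sigma.ι (fun _ : L X (n + 1) => (∂Δ[n + 1] : SSet.{u})) y ≫ attachLeft X n
    from (Sigma.ι_desc _ _).symm, Category.assoc, s.condition, ← Category.assoc,
    show Sigma.ι (fun _ : L X (n + 1) => (∂Δ[n + 1] : SSet.{u})) y ≫ attachTop X n =
      (∂Δ[n + 1]).ι ≫ Sigma.ι (fun _ : L X (n + 1) => (Δ[n + 1] : SSet.{u})) y from
      by simp [attachTop], Category.assoc]

open Classical in
/-- The function underlying the descent morphism out of the pushout. -/
noncomputable def descFun (m : SimplexCategoryᵒᵖ) (x : (sk X (n + 1)).obj m) : s.pt.obj m :=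
  if h : MemSk X n m x.1 then s.inl.app m ⟨x.1, h⟩
  else
    (Sigma.ι (fun _ : L X (n + 1) => Δ[n + 1]) (ez_exists x.2 h).choose_spec.choose ≫ s.inr).app m
      (splx n (ez_exists x.2 h).choose)

lemma descFun_of_memSk {m : SimplexCategoryᵒᵖ} (x : (sk X (n + 1)).obj m)
    (h : MemSk X n m x.1) : descFun s m x = s.inl.app m ⟨x.1, h⟩ := by
  unfold descFun; exact dif_pos h

lemma descFun_spec {m : SimplexCategoryᵒᵖ} (x : (sk X (n + 1)).obj m)
    (σ : m.unop ⟶ ⦋n + 1⦌) (hσ : Function.Surjective σ.toOrderHom) (y : L X (n + 1))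
    (hx : x.1 = X.map σ.op y.1) :
    descFun s m x = (Sigma.ι (fun _ : L X (n + 1) => Δ[n + 1]) y ≫ s.inr).app m (splx n σ) := by
  have hnot : ¬ MemSk X n m x.1 := by
    rw [hx]
    exact not_memSk_of_nondeg hσ y.2
  rw [descFun, dif_neg hnot]
  obtain ⟨hσ', heq'⟩ := (ez_exists x.2 hnot).choose_spec.choose_spec
  obtain ⟨h1, h2⟩ := ez_unique hσ' hσ ((ez_exists x.2 hnot).choose_spec.choose).2
    (heq'.symm.trans hx)
  have hy : (ez_exists x.2 hnot).choose_spec.choose = y := Subtype.ext h2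
  rw [hy, h1]

lemma descFun_boundary {m : SimplexCategoryᵒᵖ} (σ : m.unop ⟶ ⦋n + 1⦌)
    (hσ : ¬ Function.Surjective σ.toOrderHom) (y : L X (n + 1)) (z : (sk X n).obj m)
    (hz : z.1 = X.map σ.op y.1) :
    s.inl.app m z = (Sigma.ι (fun _ : L X (n + 1) => Δ[n + 1]) y ≫ s.inr).app m (splx n σ) := by
  obtain ⟨z1, hzmem⟩ := z
  dsimp at hz
  subst hz
  have hb : ¬ Function.Surjective (SSet.stdSimplex.asOrderHom (splx n σ)) := hσ
  exact ConcreteCategory.congr_hom (congrArg (fun (f : (∂Δ[n + 1] : SSet.{u}) ⟶ s.pt) => f.app m) (cond s y))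
    ⟨splx n σ, hb⟩

/-- The descent morphism out of `sk X (n+1)`. -/
noncomputable def descHom : sk X (n + 1) ⟶ s.pt where
  app m := TypeCat.ofHom (descFun s m)
  naturality m m' g := by
    ext x
    show descFun s m' ((sk X (n + 1)).map g x) = s.pt.map g (descFun s m x)
    by_cases h : MemSk X n m x.1
    · have h' : MemSk X n m' (X.map g x.1) := memSk_map g h
      rw [descFun_of_memSk s _ h', descFun_of_memSk s _ h]
      exact ConcreteCategory.congr_hom (s.inl.naturality g) ⟨x.1, h⟩
    · obtain ⟨σ, y, hσ, hx⟩ := ez_exists x.2 h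
      have hgx : X.map g x.1 = X.map (g.unop ≫ σ).op y.1 := by
        rw [hx, ← FunctorToTypes.map_comp_apply, op_comp, Quiver.Hom.op_unop]
      by_cases hsurj : Function.Surjective (g.unop ≫ σ).toOrderHom
      · rw [descFun_spec s _ (g.unop ≫ σ) hsurj y hgx, descFun_spec s x σ hσ y hx,
          ← splx_map n g σ]
        exact ConcreteCategory.congr_hom
          ((Sigma.ι (fun _ : L X (n + 1) => Δ[n + 1]) y ≫ s.inr).naturality g) (splx n σ)
      · obtain ⟨j, e, i, he, hi, hfac, hjlt⟩ := exists_factorization_lt (g.unop ≫ σ) hsurj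
        have hmem : MemSk X n m' (((sk X (n + 1)).map g x).1) :=
          ⟨j, Nat.lt_succ_iff.mp hjlt, e, X.map i.op y.1, by
            show X.map g x.1 = _
            rw [hgx, ← hfac, op_comp, FunctorToTypes.map_comp_apply]⟩
        rw [descFun_of_memSk s _ hmem, descFun_spec s x σ hσ y hx,
          descFun_boundary s (g.unop ≫ σ) hsurj y ⟨((sk X (n + 1)).map g x).1, hmem⟩ hgx,
          ← splx_map n g σ]
        exact ConcreteCategory.congr_hom
          ((Sigma.ι (fun _ : L X (n + 1) => Δ[n + 1]) y ≫ s.inr).naturality g) (splx n σ)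

lemma descHom_fac_left : skIncl X n ≫ descHom s = s.inl := by
  ext m x
  obtain ⟨x1, hx⟩ := x
  show descFun s m ⟨x1, memSk_mono (Nat.le_succ n) hx⟩ = s.inl.app m ⟨x1, hx⟩
  exact descFun_of_memSk s _ hx

lemma descHom_fac_right : attachRight X n ≫ descHom s = s.inr := by
  apply Sigma.hom_ext
  intro y
  rw [← Category.assoc, show Sigma.ι (fun _ : L X (n + 1) => Δ[n + 1]) y ≫ attachRight X n =
    attachCell X n y from Sigma.ι_desc _ _]
  ext m α
  show descFun s m ((attachCell X n y).app m α) = (Sigma.ι _ y ≫ s.inr).app m α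
  set σ := (SSet.stdSimplex.objEquiv (n := ⦋n + 1⦌) (m := m)) α with hσdef
  have hval : ((attachCell X n y).app m α).1 = X.map σ.op y.1 := rfl
  have hα : splx n σ = α := Equiv.symm_apply_apply _ _
  by_cases hsurj : Function.Surjective σ.toOrderHom
  · rw [descFun_spec s _ σ hsurj y hval, hα]
  · obtain ⟨j, e, i, he, hi, hfac, hjlt⟩ := exists_factorization_lt σ hsurj
    have hmem : MemSk X n m (((attachCell X n y).app m α).1) :=
      ⟨j, Nat.lt_succ_iff.mp hjlt, e, X.map i.op y.1, by
        rw [hval, ← hfac, op_comp, FunctorToTypes.map_comp_apply]⟩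
    rw [descFun_of_memSk s _ hmem,
      descFun_boundary s σ hsurj y ⟨((attachCell X n y).app m α).1, hmem⟩ hval, hα]

lemma descHom_uniq (f : sk X (n + 1) ⟶ s.pt) (h₁ : skIncl X n ≫ f = s.inl)
    (h₂ : attachRight X n ≫ f = s.inr) : f = descHom s := by
  ext m x
  show f.app m x = descFun s m x
  by_cases h : MemSk X n m x.1
  · rw [descFun_of_memSk s _ h]
    have hx : x = (skIncl X n).app m ⟨x.1, h⟩ := Subtype.ext rfl
    conv_lhs => rw [hx]
    exact ConcreteCategory.congr_hom (congrArg (fun (τ : sk X n ⟶ s.pt) => τ.app m) h₁) ⟨x.1, h⟩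
  · obtain ⟨σ, y, hσ, hx⟩ := ez_exists x.2 h
    rw [descFun_spec s x σ hσ y hx]
    have hx' : x = (attachCell X n y).app m (splx n σ) := Subtype.ext hx
    rw [hx']
    have hcell : attachCell X n y ≫ f = Sigma.ι (fun _ : L X (n + 1) => Δ[n + 1]) y ≫ s.inr := by
      rw [show attachCell X n y = Sigma.ι (fun _ : L X (n + 1) => Δ[n + 1]) y ≫ attachRight X n
        from (Sigma.ι_desc _ _).symm, Category.assoc, h₂]
    exact ConcreteCategory.congr_hom (congrArg (fun (τ : Δ[n + 1] ⟶ s.pt) => τ.app m) hcell) (splx n σ)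

/-- The attaching square is a pushout. -/
noncomputable def attachIsPushout :
    IsPushout (attachLeft X n) (attachTop X n) (skIncl X n) (attachRight X n) :=
  IsPushout.of_isColimit' ⟨square_comm X n⟩
    (PushoutCocone.IsColimit.mk _ (fun s => descHom s)
      (fun s => descHom_fac_left s) (fun s => descHom_fac_right s)
      (fun s f h₁ h₂ => descHom_uniq s f h₁ h₂))

end Push
/-- The skeletal decomposition of a simplicial set: for every `n`, the square attaching the
nondegenerate `(n+1)`-simplices along their boundaries is a pushout
```
∐ ∂Δ[n+1] ⟶ ∐ Δ[n+1]
   ↓             ↓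
 sk_n X  ⟶  sk_{n+1} X
```
and, moreover, `X` is the colimit of the countable sequence of skeleton inclusions
`sk_0 X ↪ sk_1 X ↪ sk_2 X ↪ ⋯`. -/
theorem skeletal_decomposition (X : SSet.{u}) :
    (∀ n : ℕ,
      IsPushout (attachLeft X n) (attachTop X n) (skIncl X n) (attachRight X n)) ∧
    Nonempty (IsColimit (skCocone X)) := by
  exact ⟨fun n => attachIsPushout, ⟨skIsColimit X⟩⟩

end SkeletalDecomposition
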